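/- arXiv:1701.01539 — 4 statements merged into one kernel-verified Lean document; each statement's English description precedes it below -/
import Mathlib

section
/- Swapping a replica between an unfilled light child and a heavier child strictly improves the failure aggregate: let T be a rooted tree with placement P, and suppose an internal node u has children c_i, c_j such that c_i is unfilled (f(c_i, P) < |C_{c_i}|) and f(c_i, P) + 1 < f(c_j, P). Let ℓ_i ∈ C_{c_i} \ P and ℓ_j ∈ C_{c_j} ∩ P, and set P* = (P \ {ℓ_j}) ∪ {ℓ_i}. Then f⃗(P*) <_L f⃗(P). Consequently, any placement that lexico-minimizes the failure aggregate is balanced. -/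
attribute [local instance] Classical.propDecidable

/-- `v` is a descendant of `u` in the rooted tree given by the `parent` map
(every vertex is a descendant of itself). -/
def isDesc {n : ℕ} (parent : Fin n → Fin n) (u v : Fin n) : Prop :=
  ∃ k : ℕ, parent^[k] v = u

/-- `v` is a leaf: no other vertex has `v` as its parent. -/
def isLeaf {n : ℕ} (parent : Fin n → Fin n) (v : Fin n) : Prop :=
  ∀ w, parent w = v → w = v

/-- The set of leaves of the tree. -/
noncomputable def leaves {n : ℕ} (parent : Fin n → Fin n) : Finset (Fin n) :=
  Finset.univ.filter (isLeaf parent)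

/-- The set `C_u` of leaf descendants of vertex `u`. -/
noncomputable def leafDesc {n : ℕ} (parent : Fin n → Fin n) (u : Fin n) : Finset (Fin n) :=
  Finset.univ.filter (fun v => isDesc parent u v ∧ isLeaf parent v)

/-- The failure number `f(u, P) = |P ∩ C_u|`. -/
noncomputable def fnum {n : ℕ} (parent : Fin n → Fin n) (u : Fin n) (P : Finset (Fin n)) : ℕ :=
  (P ∩ leafDesc parent u).card

/-- `c` is a child of `u`. -/
def isChild {n : ℕ} (parent : Fin n → Fin n) (c u : Fin n) : Prop :=
  parent c = u ∧ c ≠ u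

/-- The failure aggregate `f⃗(P) ∈ ℕ^{ρ+1}`: entry `i` counts the vertices with
failure number `ρ - i`. -/
noncomputable def fagg {n : ℕ} (parent : Fin n → Fin n) (ρ : ℕ) (P : Finset (Fin n)) :
    Fin (ρ + 1) → ℕ :=
  fun i => (Finset.univ.filter (fun v : Fin n => fnum parent v P = ρ - (i : ℕ))).card

/-- Lexicographic order on `ℕ`-vectors. -/
def lexLe {d : ℕ} (x y : Fin d → ℕ) : Prop :=
  x = y ∨ ∃ j : Fin d, x j < y j ∧ ∀ i : Fin d, i < j → x i = y i

/-- Strict lexicographic order on `ℕ`-vectors. -/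
def lexLt {d : ℕ} (x y : Fin d → ℕ) : Prop :=
  ∃ j : Fin d, x j < y j ∧ ∀ i : Fin d, i < j → x i = y i

/-- Node `u` is balanced w.r.t. `P`. -/
def balancedAt {n : ℕ} (parent : Fin n → Fin n) (u : Fin n) (P : Finset (Fin n)) : Prop :=
  ∀ ci cj : Fin n, isChild parent ci u → isChild parent cj u →
    fnum parent ci P < (leafDesc parent ci).card →
    fnum parent cj P ≤ fnum parent ci P + 1

lemma isDesc_trans {n : ℕ} (parent : Fin n → Fin n) {a b c : Fin n}
    (h1 : isDesc parent a b) (h2 : isDesc parent b c) : isDesc parent a c := by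
  obtain ⟨k, hk⟩ := h1; obtain ⟨m, hm⟩ := h2
  exact ⟨k + m, by rw [Function.iterate_add_apply, hm, hk]⟩


lemma isDesc_antisymm {n : ℕ} (parent : Fin n → Fin n) (r : Fin n) (hroot : parent r = r)
    (hreach : ∀ v, isDesc parent r v) {v w : Fin n}
    (h1 : isDesc parent v w) (h2 : isDesc parent w v) : v = w := by
  obtain ⟨k, hk⟩ := h1
  obtain ⟨l, hl⟩ := h2
  rcases Nat.eq_zero_or_pos (k + l) with h0 | hpos
  · have hk0 : k = 0 := by omega
    subst hk0; simpa using hk.symm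
  · obtain ⟨m, hm⟩ := hreach v
    have hc : parent^[k + l] v = v := by
      rw [Function.iterate_add_apply, hl, hk]
    have cyc : ∀ t, parent^[(k + l) * t] v = v := by
      intro t; induction t with
      | zero => simp
      | succ t ih =>
        have he : (k + l) * (t + 1) = (k + l) * t + (k + l) := by ring
        rw [he, Function.iterate_add_apply, hc, ih]
    have hge : (k + l) * m ≥ m := Nat.le_mul_of_pos_left m hpos
    have hvr : v = r := by
      have := cyc m
      rw [show (k + l) * m = ((k + l) * m - m) + m by omega,
        Function.iterate_add_apply, hm, Function.iterate_fixed hroot] at this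
      exact this.symm
    have hwr : w = r := by
      rw [← hl, hvr, Function.iterate_fixed hroot]
    rw [hvr, hwr]


lemma mem_leafDesc {n : ℕ} {parent : Fin n → Fin n} {v ℓ : Fin n} :
    ℓ ∈ leafDesc parent v ↔ isDesc parent v ℓ ∧ isLeaf parent ℓ := by
  simp [leafDesc]

-- chain: if parent^[k] x = v and parent^[m] x = w with k ≤ m then isDesc w v

lemma chain_desc {n : ℕ} {parent : Fin n → Fin n} {x v w : Fin n} {k m : ℕ}
    (hk : parent^[k] x = v) (hm : parent^[m] x = w) (hkm : k ≤ m) : isDesc parent w v := by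
  refine ⟨m - k, ?_⟩
  rw [← hk, ← Function.iterate_add_apply, show m - k + k = m by omega, hm]


lemma leafDesc_mono {n : ℕ} {parent : Fin n → Fin n} {v w : Fin n}
    (h : isDesc parent w v) : leafDesc parent v ⊆ leafDesc parent w := by
  intro x hx
  rw [mem_leafDesc] at *
  exact ⟨isDesc_trans parent h hx.1, hx.2⟩


lemma key_geom {n : ℕ} (parent : Fin n → Fin n) {u c c' : Fin n}
    (hc : isChild parent c u) (hc' : isChild parent c' u) {ℓ ℓ' v : Fin n}
    (hℓ : ℓ ∈ leafDesc parent c) (hℓ' : ℓ' ∈ leafDesc parent c')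
    (hv : ℓ ∈ leafDesc parent v) (hv' : ℓ' ∉ leafDesc parent v) :
    leafDesc parent v ⊆ leafDesc parent c := by
  rw [mem_leafDesc] at hℓ hℓ' hv
  obtain ⟨⟨m, hm⟩, hleaf⟩ := hℓ
  obtain ⟨⟨k, hk⟩, -⟩ := hv
  rcases le_or_gt k m with hkm | hmk
  · exact leafDesc_mono (chain_desc hk hm hkm)
  · exfalso
    apply hv'
    rw [mem_leafDesc]
    refine ⟨?_, hℓ'.2⟩
    -- v = parent^[k-m] c = parent^[k-m-1] u ; u ancestor of ℓ'
    have hvu : parent^[k - m - 1] u = v := by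
      rw [← hc.1, ← Function.iterate_succ_apply, ← hm, ← Function.iterate_add_apply,
        show k - m - 1 + 1 + m = k by omega, hk]
    obtain ⟨m', hm'⟩ := hℓ'.1
    refine ⟨k - m - 1 + (m' + 1), ?_⟩
    rw [Function.iterate_add_apply, Function.iterate_succ_apply', hm', hc'.1, hvu]


lemma children_disjoint {n : ℕ} (parent : Fin n → Fin n) (r : Fin n) (hroot : parent r = r)
    (hreach : ∀ v, isDesc parent r v) {u c c' : Fin n}
    (hc : isChild parent c u) (hc' : isChild parent c' u) (hne : c ≠ c')
    {ℓ : Fin n} (h1 : ℓ ∈ leafDesc parent c) (h2 : ℓ ∈ leafDesc parent c') : False := by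
  rw [mem_leafDesc] at h1 h2
  obtain ⟨⟨k, hk⟩, -⟩ := h1
  obtain ⟨⟨m, hm⟩, -⟩ := h2
  wlog hkm : k ≤ m generalizing c c' k m
  · exact this hc' hc hne.symm m hm k hk (by omega)
  rcases Nat.eq_or_lt_of_le hkm with heq | hlt
  · subst heq; exact hne (by rw [← hk, hm])
  · -- c' = parent^[m-k-1] u, and parent c' = u : antisymmetry gives c' = u
    have h1 : parent^[m - k - 1] u = c' := by
      rw [← hc.1, ← Function.iterate_succ_apply, ← hk, ← Function.iterate_add_apply,
        show m - k - 1 + 1 + k = m by omega, hm]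
    exact hc'.2 (isDesc_antisymm parent r hroot hreach ⟨m - k - 1, h1⟩ ⟨1, by simpa using hc'.1⟩)


lemma lexLt_lexLe_false {d : ℕ} {x y : Fin d → ℕ} (h : lexLt x y) (h' : lexLe y x) :
    False := by
  obtain ⟨j, hj, hpre⟩ := h
  rcases h' with heq | ⟨j', hj', hpre'⟩
  · rw [heq] at hj; omega
  · rcases lt_trichotomy j j' with h1 | h1 | h1
    · have := hpre' j h1; omega
    · subst h1; omega
    · have := hpre j' h1; omega

lemma swap_lemma {n ρ : ℕ} (parent : Fin n → Fin n) (r : Fin n) (hroot : parent r = r)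
    (hreach : ∀ v, isDesc parent r v) (P : Finset (Fin n)) (hPcard : P.card = ρ)
    (u ci cj : Fin n) (hci : isChild parent ci u) (hcj : isChild parent cj u)
    (himb : fnum parent ci P + 1 < fnum parent cj P)
    (ℓi ℓj : Fin n) (hℓi : ℓi ∈ leafDesc parent ci \ P) (hℓj : ℓj ∈ P ∩ leafDesc parent cj) :
    lexLt (fagg parent ρ (insert ℓi (P.erase ℓj))) (fagg parent ρ P) := by
  classical
  obtain ⟨hℓici, hℓiP⟩ := Finset.mem_sdiff.mp hℓi
  obtain ⟨hℓjP, hℓjcj⟩ := Finset.mem_inter.mp hℓj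
  set P' := insert ℓi (P.erase ℓj) with hP'
  set a := fnum parent ci P with ha
  set b := fnum parent cj P with hb
  have hcicj : ci ≠ cj := by intro h; rw [ha, h, ← hb] at himb; omega
  have hℓicj : ℓi ∉ leafDesc parent cj := fun h =>
    children_disjoint parent r hroot hreach hci hcj hcicj hℓici h
  have hℓjci : ℓj ∉ leafDesc parent ci := fun h =>
    children_disjoint parent r hroot hreach hcj hci hcicj.symm hℓjcj h
  -- per-vertex computation of the new failure number
  have hcomp : ∀ v : Fin n,
      fnum parent v P' =
        fnum parent v P + (if ℓi ∈ leafDesc parent v then 1 else 0)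
          - (if ℓj ∈ leafDesc parent v then 1 else 0) := by
    intro v
    set D := leafDesc parent v with hD
    have heq : P' ∩ D = if ℓi ∈ D then insert ℓi ((P ∩ D).erase ℓj)
        else (P ∩ D).erase ℓj := by
      by_cases hi : ℓi ∈ D
      · rw [if_pos hi, hP', Finset.insert_inter_of_mem hi, Finset.erase_inter]
      · rw [if_neg hi, hP', Finset.insert_inter_of_notMem hi, Finset.erase_inter]
    have hcard_er : ((P ∩ D).erase ℓj).card =
        (P ∩ D).card - (if ℓj ∈ D then 1 else 0) := by
      by_cases hj : ℓj ∈ D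
      · rw [if_pos hj, Finset.card_erase_of_mem (Finset.mem_inter.mpr ⟨hℓjP, hj⟩)]
      · rw [if_neg hj, Finset.erase_eq_of_notMem (fun h => hj (Finset.mem_inter.mp h).2)]
        omega
    have hℓjD : ℓj ∈ D → 1 ≤ (P ∩ D).card := fun hj =>
      Finset.card_pos.mpr ⟨ℓj, Finset.mem_inter.mpr ⟨hℓjP, hj⟩⟩
    show (P' ∩ D).card = (P ∩ D).card + (if ℓi ∈ D then 1 else 0)
        - (if ℓj ∈ D then 1 else 0)
    rw [heq]
    by_cases hi : ℓi ∈ D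
    · rw [if_pos hi, if_pos hi, Finset.card_insert_of_notMem
        (fun h => hℓiP (Finset.mem_inter.mp (Finset.mem_of_mem_erase h)).1), hcard_er]
      by_cases hj : ℓj ∈ D
      · have := hℓjD hj; rw [if_pos hj]; omega
      · rw [if_neg hj]; omega
    · rw [if_neg hi, if_neg hi, hcard_er, Nat.add_zero]
  have hbρ : b ≤ ρ := by
    rw [hb, ← hPcard]; exact Finset.card_le_card Finset.inter_subset_left
  -- the key bound for every vertex whose failure number changes
  have key : ∀ v : Fin n, fnum parent v P' ≠ fnum parent v P →
      fnum parent v P ≤ b ∧ fnum parent v P' < b := by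
    intro v hne
    have hc := hcomp v
    by_cases hi : ℓi ∈ leafDesc parent v <;> by_cases hj : ℓj ∈ leafDesc parent v
    · exfalso; apply hne
      have h1 : 1 ≤ fnum parent v P :=
        Finset.card_pos.mpr ⟨ℓj, Finset.mem_inter.mpr ⟨hℓjP, hj⟩⟩
      rw [hc, if_pos hi, if_pos hj]; omega
    · -- gains one; v is below ci
      have hsub : leafDesc parent v ⊆ leafDesc parent ci :=
        key_geom parent hci hcj hℓici hℓjcj hi hj
      have hle : fnum parent v P ≤ a :=
        Finset.card_le_card (Finset.inter_subset_inter (Finset.Subset.refl P) hsub)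
      rw [hc, if_pos hi, if_neg hj]
      omega
    · -- loses one; v is below cj
      have hsub : leafDesc parent v ⊆ leafDesc parent cj :=
        key_geom parent hcj hci hℓjcj hℓici hj hi
      have hle : fnum parent v P ≤ b :=
        Finset.card_le_card (Finset.inter_subset_inter (Finset.Subset.refl P) hsub)
      have h1 : 1 ≤ fnum parent v P :=
        Finset.card_pos.mpr ⟨ℓj, Finset.mem_inter.mpr ⟨hℓjP, hj⟩⟩
      rw [hc, if_neg hi, if_pos hj]
      omega
    · exfalso; apply hne; rw [hc, if_neg hi, if_neg hj]; omega
  have hcjP' : fnum parent cj P' = b - 1 := by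
    rw [hcomp cj, if_neg hℓicj, if_pos hℓjcj, ← hb]; omega
  refine ⟨⟨ρ - b, by omega⟩, ?_, ?_⟩
  · show (Finset.univ.filter fun v : Fin n => fnum parent v P' = ρ - (ρ - b)).card <
      (Finset.univ.filter fun v : Fin n => fnum parent v P = ρ - (ρ - b)).card
    rw [show ρ - (ρ - b) = b by omega]
    apply Finset.card_lt_card
    have hsub2 : (Finset.univ.filter fun v : Fin n => fnum parent v P' = b) ⊆
        (Finset.univ.filter fun v : Fin n => fnum parent v P = b) := by
      intro v hv
      simp only [Finset.mem_filter, Finset.mem_univ, true_and] at *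
      by_cases hch : fnum parent v P' = fnum parent v P
      · rw [← hch]; exact hv
      · exact absurd hv (by have := key v hch; omega)
    rw [Finset.ssubset_iff_of_subset hsub2]
    refine ⟨cj, ?_, ?_⟩
    · exact Finset.mem_filter.mpr ⟨Finset.mem_univ _, hb.symm⟩
    · simp only [Finset.mem_filter, Finset.mem_univ, true_and]
      rw [hcjP']; omega
  · intro i hilt
    have hival : (i : ℕ) < ρ - b := hilt
    show (Finset.univ.filter fun v : Fin n => fnum parent v P' = ρ - (i : ℕ)).card =
      (Finset.univ.filter fun v : Fin n => fnum parent v P = ρ - (i : ℕ)).card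
    congr 1
    ext v
    simp only [Finset.mem_filter, Finset.mem_univ, true_and]
    by_cases hch : fnum parent v P' = fnum parent v P
    · rw [hch]
    · have := key v hch; omega


/-- Swapping a replica from a heavy child to an unfilled light child strictly
improves the failure aggregate; consequently any lexico-minimum placement is
balanced. -/
theorem swap_improves_and_optimal_balanced {n ρ : ℕ} (parent : Fin n → Fin n)
    (r : Fin n) (hroot : parent r = r) (hreach : ∀ v, isDesc parent r v)
    (P : Finset (Fin n)) (hPleaves : P ⊆ leaves parent) (hPcard : P.card = ρ)
    (u ci cj : Fin n) (hci : isChild parent ci u) (hcj : isChild parent cj u)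
    (hunfilled : fnum parent ci P < (leafDesc parent ci).card)
    (himb : fnum parent ci P + 1 < fnum parent cj P)
    (ℓi ℓj : Fin n) (hℓi : ℓi ∈ leafDesc parent ci \ P)
    (hℓj : ℓj ∈ P ∩ leafDesc parent cj) :
    lexLt (fagg parent ρ (insert ℓi (P.erase ℓj))) (fagg parent ρ P) ∧
    (∀ Q : Finset (Fin n), Q ⊆ leaves parent → Q.card = ρ →
      (∀ Q' : Finset (Fin n), Q' ⊆ leaves parent → Q'.card = ρ →
        lexLe (fagg parent ρ Q) (fagg parent ρ Q')) →
      ∀ v : Fin n, balancedAt parent v Q) := by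
  constructor
  · exact swap_lemma parent r hroot hreach P hPcard u ci cj hci hcj himb ℓi ℓj hℓi hℓj
  · intro Q hQl hQc hmin v ci' cj' hci' hcj' hunf
    by_contra hgt
    push_neg at hgt
    -- a leaf below ci' avoiding Q
    have hex1 : ∃ ℓ, ℓ ∈ leafDesc parent ci' \ Q := by
      by_contra h
      push_neg at h
      have hsubQ : leafDesc parent ci' ⊆ Q ∩ leafDesc parent ci' := by
        intro x hx
        refine Finset.mem_inter.mpr ⟨?_, hx⟩
        by_contra hxQ
        exact h x (Finset.mem_sdiff.mpr ⟨hx, hxQ⟩)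
      have := Finset.card_le_card hsubQ
      unfold fnum at hunf
      omega
    have hex2 : ∃ ℓ, ℓ ∈ Q ∩ leafDesc parent cj' := by
      have hpos : 0 < fnum parent cj' Q := by omega
      obtain ⟨ℓ, hℓ⟩ := Finset.card_pos.mp hpos
      exact ⟨ℓ, hℓ⟩
    obtain ⟨ℓi', hℓi'⟩ := hex1
    obtain ⟨ℓj', hℓj'⟩ := hex2
    obtain ⟨hℓi'd, hℓi'Q⟩ := Finset.mem_sdiff.mp hℓi'
    obtain ⟨hℓj'Q, hℓj'd⟩ := Finset.mem_inter.mp hℓj'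
    set Q' := insert ℓi' (Q.erase ℓj') with hQ'
    have hQ'l : Q' ⊆ leaves parent := by
      intro x hx
      rcases Finset.mem_insert.mp hx with rfl | hx'
      · exact Finset.mem_filter.mpr ⟨Finset.mem_univ _, (mem_leafDesc.mp hℓi'd).2⟩
      · exact hQl (Finset.mem_of_mem_erase hx')
    have hQ'c : Q'.card = ρ := by
      have h1 : ℓi' ∉ Q.erase ℓj' := fun h => hℓi'Q (Finset.mem_of_mem_erase h)
      have h2 : 1 ≤ Q.card := Finset.card_pos.mpr ⟨ℓj', hℓj'Q⟩
      rw [hQ', Finset.card_insert_of_notMem h1, Finset.card_erase_of_mem hℓj'Q]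
      omega
    have hlt := swap_lemma parent r hroot hreach Q hQc v ci' cj' hci' hcj' hgt ℓi' ℓj'
      hℓi' hℓj'
    have hle := hmin Q' hQ'l hQ'c
    exact lexLt_lexLe_false hlt hle
end

section
/- Path-sum equivalence for greedy augmentation: let T be a rooted tree with root r and leaf set C, let P ⊆ C be a partial placement with |P| < ρ, and let u, v ∈ C \ P be distinct candidates. Then s⃗(r⇝u, P) ≤_L s⃗(r⇝v, P) if and only if f⃗(P ∪ {u}) ≤_L f⃗(P ∪ {v}), where s⃗(S, P) is the vector whose i-th entry counts the nodes x ∈ S with f(x, P) = ρ − i, and r⇝u is the set of nodes on the path from r to u (inclusive). -/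
attribute [local instance] Classical.propDecidable

/-- The set of vertices on the path from the root to `u`, i.e. the ancestors of `u`. -/
noncomputable def pathTo {n : ℕ} (parent : Fin n → Fin n) (u : Fin n) : Finset (Fin n) :=
  Finset.univ.filter (fun x => isDesc parent x u)

/-- `s⃗(S, P)`: entry `i` counts the vertices `x ∈ S` with `f(x,P) = ρ - i`. -/
noncomputable def svec {n : ℕ} (parent : Fin n → Fin n) (ρ : ℕ) (S : Finset (Fin n))
    (P : Finset (Fin n)) : Fin (ρ + 1) → ℕ :=
  fun i => (S.filter (fun x => fnum parent x P = ρ - (i : ℕ))).card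

namespace PathSumAux

variable {n : ℕ} (parent : Fin n → Fin n)

lemma mem_pathTo {x u : Fin n} : x ∈ pathTo parent u ↔ isDesc parent x u := by
  simp [pathTo]

lemma fnum_le_card (x : Fin n) (P : Finset (Fin n)) : fnum parent x P ≤ P.card :=
  Finset.card_le_card Finset.inter_subset_left

lemma fnum_insert {u : Fin n} (hu : isLeaf parent u) {P : Finset (Fin n)} (huP : u ∉ P)
    (x : Fin n) :
    fnum parent x (insert u P) =
      if isDesc parent x u then fnum parent x P + 1 else fnum parent x P := by
  unfold fnum
  by_cases h : isDesc parent x u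
  · rw [if_pos h, Finset.insert_inter_of_mem (by simp [leafDesc, h, hu]),
      Finset.card_insert_of_notMem (by simp [huP])]
  · rw [if_neg h, Finset.insert_inter_of_notMem (by simp [leafDesc, h])]

noncomputable def tvec (ρ : ℕ) (u : Fin n) (P : Finset (Fin n)) : Fin (ρ + 1) → ℕ :=
  fun i => ((pathTo parent u).filter (fun x => fnum parent x P + 1 = ρ - (i : ℕ))).card

lemma card_split (S : Finset (Fin n)) (p : Fin n → Prop) [DecidablePred p] :
    (Finset.univ.filter p).card = (S.filter p).card + (Sᶜ.filter p).card := by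
  rw [← Finset.card_union_of_disjoint (Finset.disjoint_filter_filter disjoint_compl_right),
    ← Finset.filter_union, Finset.union_compl]

lemma key {ρ : ℕ} {u : Fin n} (hu : isLeaf parent u) {P : Finset (Fin n)} (huP : u ∉ P)
    (i : Fin (ρ + 1)) :
    fagg parent ρ (insert u P) i + svec parent ρ (pathTo parent u) P i
      = fagg parent ρ P i + tvec parent ρ u P i := by
  unfold fagg svec tvec
  rw [card_split (pathTo parent u) (fun w => fnum parent w (insert u P) = ρ - (i : ℕ)),
    card_split (pathTo parent u) (fun w => fnum parent w P = ρ - (i : ℕ))]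
  have h1 : (pathTo parent u).filter (fun w => fnum parent w (insert u P) = ρ - (i : ℕ))
      = (pathTo parent u).filter (fun w => fnum parent w P + 1 = ρ - (i : ℕ)) := by
    apply Finset.filter_congr
    intro x hx
    rw [fnum_insert parent hu huP x, if_pos ((mem_pathTo parent).1 hx)]
  have h2 : ((pathTo parent u)ᶜ).filter (fun w => fnum parent w (insert u P) = ρ - (i : ℕ))
      = ((pathTo parent u)ᶜ).filter (fun w => fnum parent w P = ρ - (i : ℕ)) := by
    apply Finset.filter_congr
    intro x hx
    rw [fnum_insert parent hu huP x,
      if_neg (fun hd => (Finset.mem_compl.1 hx) ((mem_pathTo parent).2 hd))]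
  rw [h1, h2]
  ring

lemma tvec_zero {ρ : ℕ} (u : Fin n) (P : Finset (Fin n)) (i : Fin (ρ + 1))
    (hi : (i : ℕ) = ρ) : tvec parent ρ u P i = 0 := by
  unfold tvec
  rw [Finset.card_eq_zero, Finset.filter_eq_empty_iff]
  intro x _
  omega

lemma tvec_succ {ρ : ℕ} (u : Fin n) (P : Finset (Fin n)) (i : Fin (ρ + 1))
    (hi : (i : ℕ) < ρ) :
    tvec parent ρ u P i = svec parent ρ (pathTo parent u) P ⟨(i : ℕ) + 1, by omega⟩ := by
  unfold tvec svec
  apply congrArg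
  apply Finset.filter_congr
  intro x _
  simp only [Fin.val_mk]
  omega

lemma svec_zero {ρ : ℕ} (S P : Finset (Fin n)) (hP : P.card < ρ) (i : Fin (ρ + 1))
    (hi : (i : ℕ) = 0) : svec parent ρ S P i = 0 := by
  unfold svec
  rw [Finset.card_eq_zero, Finset.filter_eq_empty_iff]
  intro x _
  have := fnum_le_card parent x P
  omega

lemma lex_main {ρ : ℕ} (a su sv Fu Fv tu tv : Fin (ρ + 1) → ℕ)
    (hu : ∀ i, Fu i + su i = a i + tu i)
    (hv : ∀ i, Fv i + sv i = a i + tv i)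
    (htu : ∀ i : Fin (ρ + 1), (_ : (i : ℕ) < ρ) → tu i = su ⟨(i : ℕ) + 1, by omega⟩)
    (htv : ∀ i : Fin (ρ + 1), (_ : (i : ℕ) < ρ) → tv i = sv ⟨(i : ℕ) + 1, by omega⟩)
    (htu0 : ∀ i : Fin (ρ + 1), (i : ℕ) = ρ → tu i = 0)
    (htv0 : ∀ i : Fin (ρ + 1), (i : ℕ) = ρ → tv i = 0)
    (hsu0 : ∀ i : Fin (ρ + 1), (i : ℕ) = 0 → su i = 0)
    (hsv0 : ∀ i : Fin (ρ + 1), (i : ℕ) = 0 → sv i = 0) :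
    lexLe su sv ↔ lexLe Fu Fv := by
  have prop : ∀ (m k : ℕ) (hk : k < ρ + 1), k ≤ m →
      (∀ i : Fin (ρ + 1), (i : ℕ) < m → Fu i = Fv i) →
      su ⟨k, hk⟩ = sv ⟨k, hk⟩ := by
    intro m k
    induction k with
    | zero =>
      intro hk _ _
      rw [hsu0 ⟨0, hk⟩ rfl, hsv0 ⟨0, hk⟩ rfl]
    | succ k ih =>
      intro hk2 hkm hF
      have hk1 : k < ρ + 1 := by omega
      have hkρ : k < ρ := by omega
      have h1 : su ⟨k, hk1⟩ = sv ⟨k, hk1⟩ := ih hk1 (by omega) hF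
      have hFk : Fu ⟨k, hk1⟩ = Fv ⟨k, hk1⟩ := hF ⟨k, hk1⟩ (show k < m by omega)
      have h3 : tu ⟨k, hk1⟩ = su ⟨k + 1, hk2⟩ := htu ⟨k, hk1⟩ hkρ
      have h4 : tv ⟨k, hk1⟩ = sv ⟨k + 1, hk2⟩ := htv ⟨k, hk1⟩ hkρ
      have e1 := hu ⟨k, hk1⟩
      have e2 := hv ⟨k, hk1⟩
      rw [h3] at e1
      rw [h4] at e2
      omega
  have teq : su = sv → ∀ i, tu i = tv i := by
    intro hs i
    rcases Nat.lt_or_ge (i : ℕ) ρ with h | h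
    · rw [htu i h, htv i h, hs]
    · have : (i : ℕ) = ρ := by omega
      rw [htu0 i this, htv0 i this]
  constructor
  · rintro (hs | ⟨j, hj, hlt⟩)
    · left
      funext i
      have h0 := teq hs i
      have e1 := hu i
      have e2 := hv i
      have hsi : su i = sv i := congrFun hs i
      omega
    · right
      have hj1 : 1 ≤ (j : ℕ) := by
        by_contra h
        have h0 : (j : ℕ) = 0 := by omega
        rw [hsu0 j h0, hsv0 j h0] at hj
        omega
      have hjρ : (j : ℕ) < ρ + 1 := j.isLt
      have hq1 : (j : ℕ) - 1 < ρ + 1 := by omega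
      have hqρ : (j : ℕ) - 1 < ρ := by omega
      refine ⟨⟨(j : ℕ) - 1, hq1⟩, ?_, ?_⟩
      · have hje : (⟨(j : ℕ) - 1 + 1, by omega⟩ : Fin (ρ + 1)) = j := by
          apply Fin.ext
          show (j : ℕ) - 1 + 1 = (j : ℕ)
          omega
        have h3 : tu ⟨(j : ℕ) - 1, hq1⟩ = su ⟨(j : ℕ) - 1 + 1, by omega⟩ :=
          htu ⟨(j : ℕ) - 1, hq1⟩ hqρ
        have h4 : tv ⟨(j : ℕ) - 1, hq1⟩ = sv ⟨(j : ℕ) - 1 + 1, by omega⟩ :=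
          htv ⟨(j : ℕ) - 1, hq1⟩ hqρ
        rw [hje] at h3 h4
        have hsj' : su ⟨(j : ℕ) - 1, hq1⟩ = sv ⟨(j : ℕ) - 1, hq1⟩ := by
          apply hlt
          show (j : ℕ) - 1 < (j : ℕ)
          omega
        have e1 := hu ⟨(j : ℕ) - 1, hq1⟩
        have e2 := hv ⟨(j : ℕ) - 1, hq1⟩
        rw [h3] at e1
        rw [h4] at e2
        omega
      · intro i hi
        have hiv : (i : ℕ) < (j : ℕ) - 1 := hi
        have hsi : su i = sv i := hlt i (show (i : ℕ) < (j : ℕ) by omega)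
        have hip : (i : ℕ) < ρ := by omega
        have hi1 : (i : ℕ) + 1 < ρ + 1 := by omega
        have h3 : tu i = su ⟨(i : ℕ) + 1, hi1⟩ := htu i hip
        have h4 : tv i = sv ⟨(i : ℕ) + 1, hi1⟩ := htv i hip
        have hsi1 : su ⟨(i : ℕ) + 1, hi1⟩ = sv ⟨(i : ℕ) + 1, hi1⟩ := by
          apply hlt
          show (i : ℕ) + 1 < (j : ℕ)
          omega
        have e1 := hu i
        have e2 := hv i
        rw [h3, hsi1] at e1
        rw [h4] at e2
        omega
  · rintro (hF | ⟨j, hj, hlt⟩)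
    · left
      funext i
      have h := prop (ρ + 1) (i : ℕ) i.isLt (by omega) (fun k _ => congrFun hF k)
      simpa using h
    · right
      have hFbelow : ∀ i : Fin (ρ + 1), (i : ℕ) < (j : ℕ) → Fu i = Fv i := by
        intro i hi
        exact hlt i hi
      have hs : ∀ (k : ℕ) (hk : k < ρ + 1), k ≤ (j : ℕ) →
          su ⟨k, hk⟩ = sv ⟨k, hk⟩ := by
        intro k hk hkj
        exact prop (j : ℕ) k hk hkj hFbelow
      have hsj : su j = sv j := by
        have := hs (j : ℕ) j.isLt le_rfl
        simpa using this
      have htlt : tu j < tv j := by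
        have e1 := hu j
        have e2 := hv j
        omega
      have hjρ : (j : ℕ) < ρ := by
        by_contra h
        have hjr : (j : ℕ) = ρ := by omega
        rw [htu0 j hjr, htv0 j hjr] at htlt
        omega
      have hj1 : (j : ℕ) + 1 < ρ + 1 := by omega
      have h3 : tu j = su ⟨(j : ℕ) + 1, hj1⟩ := htu j hjρ
      have h4 : tv j = sv ⟨(j : ℕ) + 1, hj1⟩ := htv j hjρ
      refine ⟨⟨(j : ℕ) + 1, hj1⟩, ?_, ?_⟩
      · rw [← h3, ← h4]
        exact htlt
      · intro i hi
        have hiv : (i : ℕ) < (j : ℕ) + 1 := hi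
        have := hs (i : ℕ) i.isLt (by omega)
        simpa using this

end PathSumAux

/-- Path-sum equivalence for greedy augmentation:
`s⃗(r⇝u, P) ≤_L s⃗(r⇝v, P)` iff `f⃗(P ∪ {u}) ≤_L f⃗(P ∪ {v})`. -/
theorem path_sum_equivalence {n ρ : ℕ} (parent : Fin n → Fin n)
    (r : Fin n) (hroot : parent r = r) (hreach : ∀ w, isDesc parent r w)
    (P : Finset (Fin n)) (hPleaves : P ⊆ leaves parent) (hPcard : P.card < ρ)
    (u v : Fin n) (hu : u ∈ leaves parent \ P) (hv : v ∈ leaves parent \ P)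
    (huv : u ≠ v) :
    lexLe (svec parent ρ (pathTo parent u) P) (svec parent ρ (pathTo parent v) P) ↔
      lexLe (fagg parent ρ (insert u P)) (fagg parent ρ (insert v P)) := by
  obtain ⟨huL, huP⟩ := Finset.mem_sdiff.1 hu
  obtain ⟨hvL, hvP⟩ := Finset.mem_sdiff.1 hv
  have huleaf : isLeaf parent u := by simpa [leaves] using huL
  have hvleaf : isLeaf parent v := by simpa [leaves] using hvL
  exact (PathSumAux.lex_main (fagg parent ρ P)
    (svec parent ρ (pathTo parent u) P) (svec parent ρ (pathTo parent v) P)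
    (fagg parent ρ (insert u P)) (fagg parent ρ (insert v P))
    (PathSumAux.tvec parent ρ u P) (PathSumAux.tvec parent ρ v P)
    (PathSumAux.key parent huleaf huP) (PathSumAux.key parent hvleaf hvP)
    (PathSumAux.tvec_succ parent u P) (PathSumAux.tvec_succ parent v P)
    (PathSumAux.tvec_zero parent u P) (PathSumAux.tvec_zero parent v P)
    (PathSumAux.svec_zero parent _ P hPcard) (PathSumAux.svec_zero parent _ P hPcard)).symm.symm
end

section
/- Adding a fresh replica shifts the path contribution: in a rooted tree with root r, if P ⊆ C is a placement with |P| < ρ and u ∈ C \ P, then s⃗(r⇝u, P ∪ {u}) equals the left shift of s⃗(r⇝u, P); that is, s⃗(r⇝u, P ∪ {u}) = ŝ⃗(r⇝u, P), where v̂ shifts entries one position left and appends zero. -/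
attribute [local instance] Classical.propDecidable

/-- Left shift of an `ℕ`-vector: `⟨a_0, ..., a_ρ⟩ ↦ ⟨a_1, ..., a_ρ, 0⟩`. -/
def lshift {ρ : ℕ} (a : Fin (ρ + 1) → ℕ) : Fin (ρ + 1) → ℕ :=
  fun i => if h : (i : ℕ) + 1 < ρ + 1 then a ⟨(i : ℕ) + 1, h⟩ else 0

/-- Adding a fresh replica at leaf `u` shifts the contribution of the root-to-`u`
path: `s⃗(r⇝u, P ∪ {u}) = ŝ⃗(r⇝u, P)`. -/
theorem path_contribution_shift {n ρ : ℕ} (parent : Fin n → Fin n)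
    (r : Fin n) (hroot : parent r = r) (hreach : ∀ w, isDesc parent r w)
    (P : Finset (Fin n)) (hPleaves : P ⊆ leaves parent) (hPcard : P.card < ρ)
    (u : Fin n) (hu : u ∈ leaves parent \ P) :
    svec parent ρ (pathTo parent u) (insert u P) =
      lshift (svec parent ρ (pathTo parent u) P) := by
  obtain ⟨huL, huP⟩ := Finset.mem_sdiff.mp hu
  have key : ∀ x ∈ pathTo parent u, fnum parent x (insert u P) = fnum parent x P + 1 := by
    intro x hx
    simp only [pathTo, Finset.mem_filter, Finset.mem_univ, true_and] at hx
    have hmem : u ∈ leafDesc parent x := by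
      simp only [leafDesc, Finset.mem_filter, Finset.mem_univ, true_and]
      refine ⟨hx, ?_⟩
      simpa [leaves] using huL
    unfold fnum
    rw [Finset.insert_inter_of_mem hmem,
      Finset.card_insert_of_notMem (fun h => huP (Finset.mem_inter.mp h).1)]
  funext i
  unfold svec lshift
  by_cases h : (i : ℕ) + 1 < ρ + 1
  · rw [dif_pos h]
    apply Finset.card_bij (fun x _ => x) ?_ (fun _ _ _ _ h => h)
      (fun x hx => ⟨x, ?_, rfl⟩)
    · intro x hx
      simp only [Finset.mem_filter] at hx ⊢
      have := key x hx.1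
      refine ⟨hx.1, ?_⟩
      have h2 := hx.2
      omega
    · simp only [Finset.mem_filter] at hx ⊢
      have := key x hx.1
      refine ⟨hx.1, ?_⟩
      have h2 := hx.2
      omega
  · rw [dif_neg h]
    have hi : (i : ℕ) = ρ := by have := i.isLt; omega
    rw [Finset.card_eq_zero, Finset.filter_eq_empty_iff]
    intro x hx
    have := key x hx
    omega
end

section
/- Invariants of the labeling loop imply correct classification: suppose at termination of the labeling algorithm, the children of a node are partitioned into sets F (filled) and U (unfilled) with U ≠ ∅, satisfying max_{c∈F} |C_c| ≤ (r − ∑_{c∈F}|C_c|)/|U| < min_{c∈U} |C_c|, where r is the total number of replicas. Then in any balanced assignment of r replicas to the children (nonnegative integers n_c with n_c ≤ |C_c|, ∑ n_c = r, and the balancing condition: n_c < |C_c| implies n_{c'} ≤ n_c + 1 for all c'), every child c ∈ F satisfies n_c = |C_c|. -/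
/-- Invariants of the labeling loop imply correct classification: if the
children are partitioned into `F` (filled) and `U` (unfilled) with `U ≠ ∅` and
`max_{c∈F} cap c ≤ (r − σ(F)) / |U| < min_{c∈U} cap c` (stated multiplied out),
then in any balanced assignment of `r` replicas respecting capacities, every
child in `F` receives exactly its capacity. -/
theorem labeling_invariants_filled {ι : Type*} [Fintype ι] [DecidableEq ι]
    (cap : ι → ℕ) (F U : Finset ι) (hpart : F ∪ U = Finset.univ)
    (hdisj : Disjoint F U) (hUne : U.Nonempty) (r : ℕ)
    (hσ : ∑ c ∈ F, cap c ≤ r)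
    (hmax : ∀ c ∈ F, cap c * U.card ≤ r - ∑ c' ∈ F, cap c')
    (hmin : ∀ c ∈ U, r - ∑ c' ∈ F, cap c' < cap c * U.card) :
    ∀ nn : ι → ℕ, (∀ c, nn c ≤ cap c) → (∑ c, nn c) = r →
      (∀ c c' : ι, nn c < cap c → nn c' ≤ nn c + 1) →
      ∀ c ∈ F, nn c = cap c := by
  intro nn hle hsum hbal c hcF
  by_contra hne
  have hlt : nn c < cap c := lt_of_le_of_ne (hle c) hne
  -- split the total sum
  have hsplit : ∑ x, nn x = ∑ x ∈ F, nn x + ∑ x ∈ U, nn x := by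
    rw [← Finset.sum_union hdisj, hpart]
  -- sum over F is strictly less than σ(F)
  have hF : ∑ x ∈ F, nn x < ∑ x ∈ F, cap x :=
    Finset.sum_lt_sum (fun i _ => hle i) ⟨c, hcF, hlt⟩
  -- sum over U bounded
  have hU : ∑ x ∈ U, nn x ≤ cap c * U.card := by
    calc ∑ x ∈ U, nn x ≤ ∑ _x ∈ U, cap c := by
          refine Finset.sum_le_sum fun i _ => ?_
          exact le_trans (hbal c i hlt) hlt
      _ = cap c * U.card := by simp [Finset.sum_const, Nat.mul_comm]
  have hU' : ∑ x ∈ U, nn x ≤ r - ∑ c' ∈ F, cap c' := le_trans hU (hmax c hcF)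
  have : r < r := by
    calc r = ∑ x ∈ F, nn x + ∑ x ∈ U, nn x := by rw [← hsplit, hsum]
      _ < ∑ x ∈ F, cap x + (r - ∑ c' ∈ F, cap c') :=
          Nat.add_lt_add_of_lt_of_le hF hU'
      _ = r := by omega
  exact absurd this (lt_irrefl r)
end
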